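/- Let F : ℝⁿ → ℝᵐ be differentiable with Jacobian J, and suppose ‖J(y) − J(z)‖ ≤ κ_lj‖y − z‖, ‖J(y)‖ ≤ κ_lf and ‖F(y)‖ ≤ κ_bf for all y, z ∈ ℝⁿ. Then for all x, y ∈ ℝⁿ, |‖F(y)‖² − ‖F(x)‖² − 2(J(x)ᵀF(x))ᵀ(y − x)| ≤ (κ_lf² + κ_lj κ_bf)‖x − y‖². -/

import Mathlib

open Filter Matrix MeasureTheory RealInnerProductSpace

/-- The map `x ↦ A x` from `ℝⁿ` to `ℝᵖ` with the Euclidean (`ℓ²`) structure. -/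
noncomputable def mulVecE {p n : ℕ} (A : Matrix (Fin p) (Fin n) ℝ)
    (x : EuclideanSpace ℝ (Fin n)) : EuclideanSpace ℝ (Fin p) :=
  (WithLp.equiv 2 (Fin p → ℝ)).symm (A.mulVec ((WithLp.equiv 2 (Fin n → ℝ)) x))

/-- The spectral norm (ℓ²-operator norm) of a matrix. -/
noncomputable def opNorm {p n : ℕ} (A : Matrix (Fin p) (Fin n) ℝ) : ℝ :=
  sSup {r : ℝ | ∃ x : EuclideanSpace ℝ (Fin n), ‖x‖ ≤ 1 ∧ r = ‖mulVecE A x‖}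

/-- A matrix as a continuous linear map between Euclidean spaces. -/
noncomputable def jacCLM {p n : ℕ} (A : Matrix (Fin p) (Fin n) ℝ) :
    EuclideanSpace ℝ (Fin n) →L[ℝ] EuclideanSpace ℝ (Fin p) :=
  LinearMap.toContinuousLinearMap (Matrix.toEuclideanLin A)

lemma mulVecE_eq_jacCLM {p n : ℕ} (A : Matrix (Fin p) (Fin n) ℝ)
    (x : EuclideanSpace ℝ (Fin n)) : mulVecE A x = jacCLM A x := rfl

lemma mulVecE_le {p n : ℕ} (A : Matrix (Fin p) (Fin n) ℝ)
    (x : EuclideanSpace ℝ (Fin n)) : ‖mulVecE A x‖ ≤ opNorm A * ‖x‖ := by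
  have hbdd : BddAbove {r : ℝ | ∃ x : EuclideanSpace ℝ (Fin n), ‖x‖ ≤ 1 ∧ r = ‖mulVecE A x‖} := by
    refine ⟨‖jacCLM A‖, ?_⟩
    rintro r ⟨u, hu, rfl⟩
    calc ‖mulVecE A u‖ = ‖jacCLM A u‖ := rfl
      _ ≤ ‖jacCLM A‖ * ‖u‖ := (jacCLM A).le_opNorm u
      _ ≤ ‖jacCLM A‖ * 1 := by
          exact mul_le_mul_of_nonneg_left hu (norm_nonneg _)
      _ = ‖jacCLM A‖ := mul_one _
  rcases eq_or_ne x 0 with rfl | hx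
  · have h0 : mulVecE A 0 = jacCLM A 0 := rfl
    rw [h0, map_zero]
    simp only [norm_zero, mul_zero, le_refl]
  · have hxn : (0:ℝ) < ‖x‖ := norm_pos_iff.mpr hx
    set u : EuclideanSpace ℝ (Fin n) := ‖x‖⁻¹ • x with hu
    have hun : ‖u‖ ≤ 1 := by
      rw [hu, norm_smul, norm_inv, norm_norm, inv_mul_cancel₀ hxn.ne']
    have hmem : ‖mulVecE A u‖ ∈ {r : ℝ | ∃ x : EuclideanSpace ℝ (Fin n), ‖x‖ ≤ 1 ∧ r = ‖mulVecE A x‖} :=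
      ⟨u, hun, rfl⟩
    have hle : ‖mulVecE A u‖ ≤ opNorm A := le_csSup hbdd hmem
    have : mulVecE A u = ‖x‖⁻¹ • mulVecE A x := by
      rw [mulVecE_eq_jacCLM, mulVecE_eq_jacCLM, hu, _root_.map_smul]
    rw [this, norm_smul, norm_inv, norm_norm] at hle
    calc ‖mulVecE A x‖ = ‖x‖ * (‖x‖⁻¹ * ‖mulVecE A x‖) := by
          field_simp
      _ ≤ ‖x‖ * opNorm A := mul_le_mul_of_nonneg_left hle hxn.le
      _ = opNorm A * ‖x‖ := mul_comm _ _

lemma jacCLM_apply_le {p n : ℕ} (A : Matrix (Fin p) (Fin n) ℝ)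
    (x : EuclideanSpace ℝ (Fin n)) : ‖jacCLM A x‖ ≤ opNorm A * ‖x‖ := mulVecE_le A x

lemma opNorm_nonneg' {p n : ℕ} (A : Matrix (Fin p) (Fin n) ℝ) : 0 ≤ opNorm A := by
  have hbdd : BddAbove {r : ℝ | ∃ x : EuclideanSpace ℝ (Fin n), ‖x‖ ≤ 1 ∧ r = ‖mulVecE A x‖} := by
    refine ⟨‖jacCLM A‖, ?_⟩
    rintro r ⟨u, hu, rfl⟩
    calc ‖mulVecE A u‖ = ‖jacCLM A u‖ := rfl
      _ ≤ ‖jacCLM A‖ * ‖u‖ := (jacCLM A).le_opNorm u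
      _ ≤ ‖jacCLM A‖ * 1 := mul_le_mul_of_nonneg_left hu (norm_nonneg _)
      _ = ‖jacCLM A‖ := mul_one _
  have hmem : (0:ℝ) ∈ {r : ℝ | ∃ x : EuclideanSpace ℝ (Fin n), ‖x‖ ≤ 1 ∧ r = ‖mulVecE A x‖} := by
    refine ⟨0, by simp, ?_⟩
    have h0 : mulVecE A 0 = jacCLM A 0 := rfl
    rw [h0, map_zero, norm_zero]
  exact le_csSup hbdd hmem

lemma jacCLM_norm_le {p n : ℕ} (A : Matrix (Fin p) (Fin n) ℝ) :
    ‖jacCLM A‖ ≤ opNorm A :=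
  ContinuousLinearMap.opNorm_le_bound _ (opNorm_nonneg' A) (jacCLM_apply_le A)

lemma jacCLM_sub {p n : ℕ} (A B : Matrix (Fin p) (Fin n) ℝ) :
    jacCLM (A - B) = jacCLM A - jacCLM B := by
  ext x
  simp [jacCLM, map_sub]

lemma adjoint_inner {p n : ℕ} (A : Matrix (Fin p) (Fin n) ℝ)
    (u : EuclideanSpace ℝ (Fin p)) (v : EuclideanSpace ℝ (Fin n)) :
    ⟪mulVecE Aᵀ u, v⟫ = ⟪u, jacCLM A v⟫ := by
  simp only [PiLp.inner_apply, RCLike.inner_apply, conj_trivial]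
  show ∑ i, v i * (Aᵀ.mulVec (fun j => u j)) i = ∑ i, (A.mulVec (fun j => v j)) i * u i
  rw [← dotProduct, ← dotProduct, dotProduct_comm, Matrix.mulVec_transpose,
    ← Matrix.dotProduct_mulVec, dotProduct_comm]


/-- Quadratic upper bound for `‖F‖²` around `x`:
`|‖F(y)‖² − ‖F(x)‖² − (2J(x)ᵀF(x))ᵀ(y − x)| ≤ (κlf² + κlj κbf)‖x − y‖²`. -/
theorem normSq_quadratic_bound {n m : ℕ}
    (F : EuclideanSpace ℝ (Fin n) → EuclideanSpace ℝ (Fin m))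
    (J : EuclideanSpace ℝ (Fin n) → Matrix (Fin m) (Fin n) ℝ)
    (hF : ∀ z, HasFDerivAt F (jacCLM (J z)) z)
    (κlj κlf κbf : ℝ)
    (hJlip : ∀ y z, opNorm (J y - J z) ≤ κlj * ‖y - z‖)
    (hJb : ∀ y, opNorm (J y) ≤ κlf)
    (hFb : ∀ y, ‖F y‖ ≤ κbf) :
    ∀ x y : EuclideanSpace ℝ (Fin n),
      |‖F y‖ ^ 2 - ‖F x‖ ^ 2 - 2 * ⟪mulVecE (J x)ᵀ (F x), y - x⟫| ≤
        (κlf ^ 2 + κlj * κbf) * ‖x - y‖ ^ 2 := by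
  intro x y
  set d : EuclideanSpace ℝ (Fin n) := y - x with hd
  have hκbf : 0 ≤ κbf := le_trans (norm_nonneg _) (hFb x)
  -- F is κlf-Lipschitz
  have hFlip : ∀ a b : EuclideanSpace ℝ (Fin n), ‖F b - F a‖ ≤ κlf * ‖b - a‖ := by
    intro a b
    exact Convex.norm_image_sub_le_of_norm_hasFDerivWithin_le
      (fun z _ => (hF z).hasFDerivWithinAt)
      (fun z _ => le_trans (jacCLM_norm_le _) (hJb z)) convex_univ trivial trivial
  -- the curve
  set c : ℝ → EuclideanSpace ℝ (Fin n) := fun t => x + t • d with hc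
  have hcx : ∀ t, c t - x = t • d := fun t => by simp [hc]
  have hcderiv : ∀ t : ℝ, HasDerivAt c d t := by
    intro t
    have h1 : HasDerivAt (fun t : ℝ => t • d) ((1:ℝ) • d) t :=
      (hasDerivAt_id t).smul_const d
    have := h1.const_add x
    simpa [hc] using this
  have hFc : ∀ t : ℝ, HasDerivAt (fun s => F (c s)) (jacCLM (J (c t)) d) t := by
    intro t
    exact (hF (c t)).comp_hasDerivAt t (hcderiv t)
  set g' : ℝ → ℝ := fun t => 2 * ⟪F (c t), jacCLM (J (c t)) d⟫ with hg'
  set h : ℝ → ℝ := fun t => ⟪F (c t), F (c t)⟫ - ⟪F x, F x⟫ - t * g' 0 with hh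
  have hhderiv : ∀ t : ℝ, HasDerivAt h (g' t - g' 0) t := by
    intro t
    have h1 : HasDerivAt (fun s => ⟪F (c s), F (c s)⟫) (g' t) t := by
      have := HasDerivAt.inner ℝ (hFc t) (hFc t)
      refine this.congr_deriv ?_
      rw [hg']
      simp only
      rw [real_inner_comm (jacCLM (J (c t)) d) (F (c t))]
      ring
    have h2 : HasDerivAt (fun s : ℝ => ⟪F x, F x⟫ + s * g' 0) (g' 0) t := by
      simpa using ((hasDerivAt_id t).mul_const (g' 0)).const_add (⟪F x, F x⟫ : ℝ)
    have heq : h = fun s => ⟪F (c s), F (c s)⟫ - (⟪F x, F x⟫ + s * g' 0) := by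
      funext s; rw [hh]; ring
    rw [heq]
    exact h1.sub h2
  have hκlf : 0 ≤ κlf := le_trans (opNorm_nonneg' (J x)) (hJb x)
  have hc0 : c 0 = x := by simp [hc]
  set L : ℝ := 2 * (κlf ^ 2 + κlj * κbf) * ‖d‖ ^ 2 with hL
  -- bound |g' t - g' 0| ≤ L * t on [0,1)
  have hbound : ∀ t ∈ Set.Ico (0:ℝ) 1, ‖g' t - g' 0‖ ≤ L * t := by
    intro t ht
    have ht0 : 0 ≤ t := ht.1
    have hcxnorm : ‖c t - x‖ = t * ‖d‖ := by
      rw [hcx, norm_smul, Real.norm_eq_abs, abs_of_nonneg ht0]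
    have split : g' t - g' 0 =
        2 * (⟪F (c t) - F x, jacCLM (J (c t)) d⟫
          + ⟪F x, jacCLM (J (c t)) d - jacCLM (J x) d⟫) := by
      rw [hg']; simp only [hc0]
      rw [inner_sub_left, inner_sub_right]
      ring
    rw [split, Real.norm_eq_abs]
    have b1 : |⟪F (c t) - F x, jacCLM (J (c t)) d⟫| ≤ (κlf * (t * ‖d‖)) * (κlf * ‖d‖) := by
      refine le_trans (abs_real_inner_le_norm _ _) (mul_le_mul ?_ ?_ (norm_nonneg _) ?_)
      · rw [← hcxnorm]; exact hFlip x (c t)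
      · exact le_trans (jacCLM_apply_le _ _)
          (mul_le_mul_of_nonneg_right (hJb _) (norm_nonneg _))
      · exact mul_nonneg hκlf (by positivity)
    have b2 : |⟪F x, jacCLM (J (c t)) d - jacCLM (J x) d⟫| ≤ κbf * (κlj * (t * ‖d‖) * ‖d‖) := by
      refine le_trans (abs_real_inner_le_norm _ _) (mul_le_mul (hFb x) ?_ (norm_nonneg _) hκbf)
      have : jacCLM (J (c t)) d - jacCLM (J x) d = jacCLM (J (c t) - J x) d := by
        rw [jacCLM_sub]; rfl
      rw [this]
      refine le_trans (jacCLM_apply_le _ _) ?_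
      refine mul_le_mul_of_nonneg_right ?_ (norm_nonneg _)
      rw [← hcxnorm]
      exact hJlip (c t) x
    calc |2 * (⟪F (c t) - F x, jacCLM (J (c t)) d⟫
          + ⟪F x, jacCLM (J (c t)) d - jacCLM (J x) d⟫)|
        ≤ 2 * ((κlf * (t * ‖d‖)) * (κlf * ‖d‖) + κbf * (κlj * (t * ‖d‖) * ‖d‖)) := by
          rw [abs_mul, abs_two]
          exact mul_le_mul_of_nonneg_left
            (le_trans (abs_add_le _ _) (add_le_add b1 b2)) (by norm_num)
      _ = L * t := by rw [hL]; ring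
  -- fencing
  have key : ∀ t ∈ Set.Icc (0:ℝ) 1, ‖h t‖ ≤ L / 2 * t ^ 2 := by
    intro t ht
    refine image_norm_le_of_norm_deriv_right_le_deriv_boundary
      (f := h) (f' := fun t => g' t - g' 0) (B := fun t => L / 2 * t ^ 2)
      (B' := fun t => L * t) ?_ ?_ ?_ ?_ ?_ ht
    · exact fun s _ => (hhderiv s).continuousAt.continuousWithinAt
    · exact fun s _ => (hhderiv s).hasDerivWithinAt
    · simp [hh, hc0]
    · intro s
      have : HasDerivAt (fun t : ℝ => L / 2 * t ^ 2) (L / 2 * (2 * s)) s := by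
        simpa using ((hasDerivAt_pow 2 s).const_mul (L / 2))
      convert this using 1; ring
    · exact hbound
  have h1 := key 1 (by norm_num)
  have hc1 : c 1 = y := by simp [hc, hd]
  have hgoal : ‖F y‖ ^ 2 - ‖F x‖ ^ 2 - 2 * ⟪mulVecE (J x)ᵀ (F x), y - x⟫ = h 1 := by
    rw [hh]
    simp only [hc1, hg', hc0, one_mul]
    rw [real_inner_self_eq_norm_sq, real_inner_self_eq_norm_sq,
      adjoint_inner (J x) (F x) (y - x)]
  rw [hgoal]
  calc |h 1| ≤ L / 2 * 1 ^ 2 := h1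
    _ = (κlf ^ 2 + κlj * κbf) * ‖x - y‖ ^ 2 := by
        rw [hL, hd, norm_sub_rev]; ring
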